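/- Let m ≥ 2, let λ ∈ ℂ^m, let N be an m×m matrix with integer entries, and let p ∈ ℤ^m. Assume that for every j one has i p_j + Σ_{k=1}^{m} N_{j,k} λ_k = 0, and that the m×m matrix whose columns are p, N_{·,1}, …, N_{·,m−1} (the first m−1 columns of N preceded by p) has nonzero determinant. Then λ_m ≠ 0, and there exist rational numbers q_1, …, q_m such that λ_k = q_k · i for every k. -/

import Mathlib

/-- Case (2.11) in the proof of Lemma 2.4: if `i p_j + Σ_k N_{j,k} λ_k = 0` for
all `j`, and the matrix `Q` whose columns are `p, N_{·,1}, …, N_{·,m−1}` has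
nonzero determinant, then `λ_m ≠ 0` and all `λ_k` are rational multiples of the
imaginary unit `i`. -/
theorem stmt_10 {m : ℕ} (hm : 2 ≤ m) (lam : Fin m → ℂ)
    (N : Matrix (Fin m) (Fin m) ℤ) (p : Fin m → ℤ)
    (hres : ∀ j : Fin m,
      Complex.I * (p j : ℂ) + ∑ k, (N j k : ℂ) * lam k = 0)
    (Q : Matrix (Fin m) (Fin m) ℤ)
    (hQ : ∀ j k : Fin m, Q j k =
      if (k : ℕ) = 0 then p j
      else N j ⟨(k : ℕ) - 1, Nat.lt_of_le_of_lt (Nat.sub_le _ _) k.isLt⟩)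
    (hdet : Q.det ≠ 0) :
    lam ⟨m - 1, by omega⟩ ≠ 0 ∧
      ∃ q : Fin m → ℚ, ∀ k : Fin m, lam k = (q k : ℂ) * Complex.I := by
  obtain ⟨n, rfl⟩ : ∃ n, m = n + 2 := ⟨m - 2, by omega⟩
  set lst : Fin (n + 2) := Fin.last (n + 1) with hlst
  have hidx : (⟨n + 2 - 1, by omega⟩ : Fin (n + 2)) = lst := by
    ext; simp [hlst]
  rw [hidx]
  -- the vector (i, λ₀, …, λ_n)
  set x : Fin (n + 2) → ℂ :=
    Fin.cons Complex.I (fun k : Fin (n + 1) => lam k.castSucc) with hx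
  set Q' : Matrix (Fin (n + 2)) (Fin (n + 2)) ℂ := Q.map (Int.cast) with hQ'
  have hQ0 : ∀ j, Q j 0 = p j := fun j => by simpa using hQ j 0
  have hQs : ∀ j (k : Fin (n + 1)), Q j k.succ = N j k.castSucc := by
    intro j k
    rw [hQ]
    have h1 : ((k.succ : Fin (n + 2)) : ℕ) = (k : ℕ) + 1 := rfl
    simp only [h1]
    rw [if_neg (by omega)]
    congr 1
  have hmul : Q'.mulVec x = fun j => -lam lst * (N j lst : ℂ) := by
    funext j
    have hr := hres j
    rw [Fin.sum_univ_castSucc] at hr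
    show ∑ k, (Q j k : ℂ) * x k = _
    rw [Fin.sum_univ_succ]
    simp only [hx, Fin.cons_zero, Fin.cons_succ, hQ0, hQs]
    linear_combination hr
  -- Cramer's rule
  set d : Fin (n + 2) → ℤ :=
    fun j => (Q.updateCol j (fun i => N i lst)).det with hd
  have hdet' : Q'.det = (Q.det : ℂ) := by
    rw [hQ']
    exact (RingHom.map_det (Int.castRingHom ℂ) Q).symm
  have hcram : (Q.det : ℂ) • x =
      Matrix.cramer Q' (fun j => -lam lst * (N j lst : ℂ)) := by
    rw [← hmul, Matrix.cramer_eq_adjugate_mulVec, Matrix.mulVec_mulVec,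
      Matrix.adjugate_mul, hdet', Matrix.smul_mulVec, Matrix.one_mulVec]
  have key : ∀ j, (Q.det : ℂ) * x j = -lam lst * (d j : ℂ) := by
    intro j
    have h0 : (fun i => -lam lst * (N i lst : ℂ)) =
        (-lam lst) • (fun i => ((N i lst : ℤ) : ℂ)) := by
      funext i; simp [smul_eq_mul]
    have h1 := congrFun hcram j
    rw [h0, map_smul] at h1
    simp only [Pi.smul_apply, smul_eq_mul] at h1
    rw [h1]
    congr 1
    rw [Matrix.cramer_apply]
    have h2 : Q'.updateCol j (fun i => ((N i lst : ℤ) : ℂ)) =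
        (Q.updateCol j (fun i => N i lst)).map Int.cast := by
      rw [hQ', Matrix.map_updateCol]
      rfl
    rw [h2, hd]
    exact (RingHom.map_det (Int.castRingHom ℂ) _).symm
  have hQdnz : (Q.det : ℂ) ≠ 0 := by exact_mod_cast hdet
  have k0 := key 0
  rw [show x 0 = Complex.I from rfl] at k0
  have hlamnz : lam lst ≠ 0 := by
    intro h
    rw [h] at k0
    simp [hQdnz, Complex.I_ne_zero] at k0
  have hd0nz : (d 0 : ℂ) ≠ 0 := by
    intro h
    rw [h] at k0
    simp [hQdnz, Complex.I_ne_zero, hlamnz] at k0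
  have hd0nzZ : d 0 ≠ 0 := fun h => hd0nz (by exact_mod_cast h)
  have hd0nzQ : (d 0 : ℚ) ≠ 0 := Int.cast_ne_zero.mpr hd0nzZ
  set qd : ℚ := -(Q.det : ℚ) / (d 0 : ℚ) with hqd
  have hqdC : ((qd : ℚ) : ℂ) * (d 0 : ℂ) = -(Q.det : ℂ) := by
    have : qd * (d 0 : ℚ) = -(Q.det : ℚ) := by
      rw [hqd, div_mul_cancel₀ _ hd0nzQ]
    calc ((qd : ℚ) : ℂ) * (d 0 : ℂ) = ((qd * (d 0 : ℚ) : ℚ) : ℂ) := by push_cast; ring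
    _ = -(Q.det : ℂ) := by rw [this, Rat.cast_neg, Rat.cast_intCast]
  have hlamlst : lam lst = (qd : ℂ) * Complex.I := by
    have h1 : (d 0 : ℂ) * lam lst = (d 0 : ℂ) * ((qd : ℂ) * Complex.I) := by
      linear_combination k0 - Complex.I * hqdC
    exact mul_left_cancel₀ hd0nz h1
  refine ⟨hlamnz, fun k => if h : (k : ℕ) = n + 1 then qd
    else (d ⟨(k : ℕ) + 1, by omega⟩ : ℚ) / (d 0 : ℚ), fun k => ?_⟩
  induction k using Fin.lastCases with
  | last =>
    beta_reduce
    rw [dif_pos (by simp)]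
    exact hlamlst
  | cast i =>
    have hik : ((i.castSucc : Fin (n + 2)) : ℕ) = (i : ℕ) := rfl
    have hne : ¬ ((i.castSucc : Fin (n + 2)) : ℕ) = n + 1 := by
      rw [hik]; omega
    beta_reduce
    rw [dif_neg hne]
    have hsucc : (⟨((i.castSucc : Fin (n + 2)) : ℕ) + 1, by omega⟩ : Fin (n + 2)) = i.succ := by
      ext; simp [hik]
    rw [hsucc]
    have ki := key i.succ
    rw [show x i.succ = lam i.castSucc from rfl] at ki
    -- λ_k = (d (i.succ) / d 0) * I
    have h1 : (Q.det : ℂ) * ((d 0 : ℂ) * lam i.castSucc) =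
        (Q.det : ℂ) * ((d 0 : ℂ) * ((((d i.succ : ℚ) / (d 0 : ℚ) : ℚ) : ℂ) * Complex.I)) := by
      have hcast : (((d i.succ : ℚ) / (d 0 : ℚ) : ℚ) : ℂ) * (d 0 : ℂ) = (d i.succ : ℂ) := by
        have : ((d i.succ : ℚ) / (d 0 : ℚ)) * (d 0 : ℚ) = (d i.succ : ℚ) := by
          field_simp
        calc (((d i.succ : ℚ) / (d 0 : ℚ) : ℚ) : ℂ) * (d 0 : ℂ)
            = ((((d i.succ : ℚ) / (d 0 : ℚ)) * (d 0 : ℚ) : ℚ) : ℂ) := by push_cast; ring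
        _ = (d i.succ : ℂ) := by rw [this]; push_cast; ring
      linear_combination (d 0 : ℂ) * ki - (d i.succ : ℂ) * (d 0 : ℂ) * hlamlst
        - (d i.succ : ℂ) * Complex.I * hqdC - (Q.det : ℂ) * Complex.I * hcast
    exact mul_left_cancel₀ hd0nz (mul_left_cancel₀ hQdnz h1)
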